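/- Step-1 uniform output bound: Let T ∈ (0, ∞], let y₁, y₂ : [0, T) → ℝ≥0 be bounded on every compact subinterval [0, t], and let γ₁, γ₂ be of class K, ρ₁, ρ₂ of class K∞, and b₁, b₂, v₁, v₂, d₁, d₂, d₃ ≥ 0 be constants such that: (i) y₁(t) ≤ b₁ + γ₁(sup_{s ∈ [0,t]} y₂(s)) + v₁ + d₁ and y₂(t) ≤ b₂ + γ₂(sup_{s ∈ [0,t]} y₁(s)) + v₂ + d₂ for all t ∈ [0, T); and (ii) γ₂((Id + ρ₁)(γ₁(s))) ≤ (Id + ρ₂)⁻¹(s) + d₃ for all s ≥ 0. Then for all t ∈ [0, T), y₂(t) ≤ (Id + ρ₂⁻¹)(b₂ + d₃ + γ₂((Id + ρ₁⁻¹)(b₁ + v₁ + d₁)) + v₂ + d₂). In particular y₂ is bounded on [0, T) by a constant independent of T. -/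

import Mathlib

open scoped NNReal ENNReal

/-- A function `γ : ℝ≥0 → ℝ≥0` is of class K if it is continuous, strictly
increasing, and `γ 0 = 0`. -/
def ClassK (γ : ℝ≥0 → ℝ≥0) : Prop := Continuous γ ∧ StrictMono γ ∧ γ 0 = 0

/-- A function `ρ : ℝ≥0 → ℝ≥0` is of class K∞ if it is of class K and unbounded. -/
def ClassKInf (ρ : ℝ≥0 → ℝ≥0) : Prop :=
  ClassK ρ ∧ Filter.Tendsto ρ Filter.atTop Filter.atTop

/-- Step-1 uniform output bound.  The trajectories `y₁, y₂` are viewed as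
functions on `ℝ≥0`, constrained only on `[0, T)` with `T ∈ (0, ∞]`; `σ₂`
denotes the inverse bijection of `Id + ρ₂` and `ρᵢinv` that of `ρᵢ`. -/
theorem step1_uniform_output_bound
    (T : ℝ≥0∞) (hT : 0 < T)
    (y₁ y₂ : ℝ≥0 → ℝ≥0)
    (γ₁ γ₂ ρ₁ ρ₂ ρ₁inv ρ₂inv σ₂ : ℝ≥0 → ℝ≥0)
    (b₁ b₂ v₁ v₂ d₁ d₂ d₃ : ℝ≥0)
    (hγ₁ : ClassK γ₁) (hγ₂ : ClassK γ₂)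
    (hρ₁ : ClassKInf ρ₁) (hρ₂ : ClassKInf ρ₂)
    (hρ₁invl : Function.LeftInverse ρ₁inv ρ₁)
    (hρ₁invr : Function.RightInverse ρ₁inv ρ₁)
    (hρ₂invl : Function.LeftInverse ρ₂inv ρ₂)
    (hρ₂invr : Function.RightInverse ρ₂inv ρ₂)
    (hσ₂l : Function.LeftInverse σ₂ (fun s => s + ρ₂ s))
    (hσ₂r : Function.RightInverse σ₂ (fun s => s + ρ₂ s))
    (hbdd : ∀ t : ℝ≥0, (t : ℝ≥0∞) < T →
      BddAbove (y₁ '' Set.Icc 0 t) ∧ BddAbove (y₂ '' Set.Icc 0 t))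
    (hy₁ : ∀ t : ℝ≥0, (t : ℝ≥0∞) < T →
      y₁ t ≤ b₁ + γ₁ (sSup (y₂ '' Set.Icc 0 t)) + v₁ + d₁)
    (hy₂ : ∀ t : ℝ≥0, (t : ℝ≥0∞) < T →
      y₂ t ≤ b₂ + γ₂ (sSup (y₁ '' Set.Icc 0 t)) + v₂ + d₂)
    (hsg : ∀ s : ℝ≥0, γ₂ (γ₁ s + ρ₁ (γ₁ s)) ≤ σ₂ s + d₃) :
    ∀ t : ℝ≥0, (t : ℝ≥0∞) < T →
      y₂ t ≤
        (b₂ + d₃ + γ₂ ((b₁ + v₁ + d₁) + ρ₁inv (b₁ + v₁ + d₁)) + v₂ + d₂) +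
          ρ₂inv (b₂ + d₃ + γ₂ ((b₁ + v₁ + d₁) + ρ₁inv (b₁ + v₁ + d₁)) + v₂ + d₂) := by

  obtain ⟨hγ₁c, hγ₁m, hγ₁0⟩ := hγ₁
  obtain ⟨hγ₂c, hγ₂m, hγ₂0⟩ := hγ₂
  obtain ⟨⟨hρ₁c, hρ₁m, hρ₁0⟩, -⟩ := hρ₁
  obtain ⟨⟨hρ₂c, hρ₂m, hρ₂0⟩, -⟩ := hρ₂
  set B := b₁ + v₁ + d₁ with hBdef
  set C := b₂ + d₃ + γ₂ (B + ρ₁inv B) + v₂ + d₂ with hCdef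
  have hf₂m : StrictMono (fun s : ℝ≥0 => s + ρ₂ s) := fun a b h => add_lt_add h (hρ₂m h)
  have hσ₂m : Monotone σ₂ := by
    intro a b hab
    by_contra hc
    push_neg at hc
    have h2 := hf₂m hc
    simp only [hσ₂r a, hσ₂r b] at h2
    exact absurd hab (not_le.mpr h2)
  have hρ₂invm : Monotone ρ₂inv := by
    intro a b hab
    by_contra hc
    push_neg at hc
    have h2 := hρ₂m hc
    rw [hρ₂invr a, hρ₂invr b] at h2
    exact absurd hab (not_le.mpr h2)
  have hρ₁invm : Monotone ρ₁inv := by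
    intro a b hab
    by_contra hc
    push_neg at hc
    have h2 := hρ₁m hc
    rw [hρ₁invr a, hρ₁invr b] at h2
    exact absurd hab (not_le.mpr h2)
  have hne : ∀ t : ℝ≥0, (Set.Icc (0:ℝ≥0) t).Nonempty := fun t => ⟨0, le_refl 0, zero_le⟩
  -- key estimate
  have key : ∀ t : ℝ≥0, (t : ℝ≥0∞) < T → y₂ t ≤ C + σ₂ (sSup (y₂ '' Set.Icc 0 t)) := by
    intro t ht
    set s := sSup (y₂ '' Set.Icc 0 t) with hs
    have hM₁ : sSup (y₁ '' Set.Icc 0 t) ≤ B + γ₁ s := by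
      apply csSup_le ((hne t).image _)
      rintro x ⟨u, hu, rfl⟩
      have huT : (u : ℝ≥0∞) < T := lt_of_le_of_lt (by exact_mod_cast hu.2) ht
      have h1 : sSup (y₂ '' Set.Icc 0 u) ≤ s := by
        apply csSup_le_csSup (hbdd t ht).2 ((hne u).image _)
        exact Set.image_mono (Set.Icc_subset_Icc_right hu.2)
      calc y₁ u ≤ b₁ + γ₁ (sSup (y₂ '' Set.Icc 0 u)) + v₁ + d₁ := hy₁ u huT
        _ ≤ b₁ + γ₁ s + v₁ + d₁ := by
            gcongr
            exact hγ₁m.monotone h1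
        _ = B + γ₁ s := by rw [hBdef]; ring
    have h2 : y₂ t ≤ b₂ + γ₂ (B + γ₁ s) + v₂ + d₂ := by
      calc y₂ t ≤ b₂ + γ₂ (sSup (y₁ '' Set.Icc 0 t)) + v₂ + d₂ := hy₂ t ht
        _ ≤ b₂ + γ₂ (B + γ₁ s) + v₂ + d₂ := by gcongr; exact hγ₂m.monotone hM₁
    rcases le_total B (ρ₁ (γ₁ s)) with hcase | hcase
    · have h3 : γ₂ (B + γ₁ s) ≤ σ₂ s + d₃ := by
        refine le_trans (hγ₂m.monotone ?_) (hsg s)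
        calc B + γ₁ s ≤ ρ₁ (γ₁ s) + γ₁ s := by gcongr
          _ = γ₁ s + ρ₁ (γ₁ s) := add_comm _ _
      calc y₂ t ≤ b₂ + (σ₂ s + d₃) + v₂ + d₂ := le_trans h2 (by gcongr)
        _ = (b₂ + d₃ + v₂ + d₂) + σ₂ s := by ring
        _ ≤ ((b₂ + d₃ + v₂ + d₂) + γ₂ (B + ρ₁inv B)) + σ₂ s :=
            add_le_add_left (self_le_add_right _ _) _
        _ = C + σ₂ s := by rw [hCdef]; ring
    · have h4 : γ₁ s ≤ ρ₁inv B := by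
        have := hρ₁invm hcase
        rwa [hρ₁invl (γ₁ s)] at this
      calc y₂ t ≤ b₂ + γ₂ (B + ρ₁inv B) + v₂ + d₂ := by
            refine le_trans h2 ?_
            gcongr
            exact hγ₂m.monotone (by gcongr)
        _ ≤ C := by
            rw [hCdef, show b₂ + d₃ + γ₂ (B + ρ₁inv B) + v₂ + d₂
              = (b₂ + γ₂ (B + ρ₁inv B) + v₂ + d₂) + d₃ from by ring]
            exact self_le_add_right _ _
        _ ≤ C + σ₂ s := le_self_add
  intro t ht
  set m := sSup (y₂ '' Set.Icc 0 t) with hm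
  have hym : y₂ t ≤ m := le_csSup (hbdd t ht).2 ⟨t, ⟨zero_le, le_refl t⟩, rfl⟩
  have hmC : m ≤ C + σ₂ m := by
    apply csSup_le ((hne t).image _)
    rintro x ⟨u, hu, rfl⟩
    have huT : (u : ℝ≥0∞) < T := lt_of_le_of_lt (by exact_mod_cast hu.2) ht
    refine le_trans (key u huT) ?_
    gcongr
    apply hσ₂m
    apply csSup_le_csSup (hbdd t ht).2 ((hne u).image _)
    exact Set.image_mono (Set.Icc_subset_Icc_right hu.2)
  set u := σ₂ m with hu
  have hmu : u + ρ₂ u = m := hσ₂r m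
  have hρu : ρ₂ u ≤ C := by
    have h5 : m ≤ u + C := by rw [add_comm]; exact hmC
    rw [← hmu] at h5
    exact le_of_add_le_add_left h5
  have huC : u ≤ ρ₂inv C := by
    have := hρ₂invm hρu
    rwa [hρ₂invl u] at this
  calc y₂ t ≤ m := hym
    _ = u + ρ₂ u := hmu.symm
    _ ≤ ρ₂inv C + C := add_le_add huC hρu
    _ = C + ρ₂inv C := add_comm _ _
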